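/- arXiv:1402.6079 — 2 statements merged into one kernel-verified Lean document; each statement's English description precedes it below -/
import Mathlib

section
/- In a Steiner minimal tree in the Euclidean plane, any two edges meeting at a common vertex form an angle of at least 120 degrees. -/
open scoped Classical

noncomputable section

/-- The Euclidean plane. -/
abbrev E2 := EuclideanSpace ℝ (Fin 2)

/-- Length of an (unordered) edge under an embedding of vertices in the plane. -/
noncomputable def edgeLen {α : Type*} (pos : α → E2) : Sym2 α → ℝ :=
  Sym2.lift ⟨fun a b => dist (pos a) (pos b), fun _ _ => dist_comm _ _⟩

/-- Total Euclidean length of a graph whose vertices are embedded in the plane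
(edges are straight segments). -/
noncomputable def treeLength {n : ℕ} (G : SimpleGraph (Fin n)) (pos : Fin n → E2) : ℝ :=
  ∑ e ∈ G.edgeFinset, edgeLen pos e

/-- A Steiner tree connecting a finite boundary set `M ⊆ ℝ²`: a tree embedded in the
plane (straight segment edges) whose vertex set contains `M`. -/
def IsSteinerTree (M : Finset E2) {n : ℕ} (G : SimpleGraph (Fin n)) (pos : Fin n → E2) : Prop :=
  G.IsTree ∧ Function.Injective pos ∧ ↑M ⊆ Set.range pos

/-- A Steiner minimal tree for `M`: a Steiner tree for `M` of minimal total length among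
all Steiner trees for `M` (with any number of extra Steiner points). -/
def IsSMT (M : Finset E2) {n : ℕ} (G : SimpleGraph (Fin n)) (pos : Fin n → E2) : Prop :=
  IsSteinerTree M G pos ∧
    ∀ (m : ℕ) (G' : SimpleGraph (Fin m)) (pos' : Fin m → E2),
      IsSteinerTree M G' pos' → treeLength G pos ≤ treeLength G' pos'

namespace SteinerAux

open scoped RealInnerProductSpace

/-- Reachability transfer along edge-wise reachability, through a map. -/
theorem reachable_map {V W : Type*} {G : SimpleGraph V} {H : SimpleGraph W} (f : V → W)
    (h : ∀ x y, G.Adj x y → H.Reachable (f x) (f y)) {x y : V} (hr : G.Reachable x y) :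
    H.Reachable (f x) (f y) := by
  obtain ⟨w⟩ := hr
  induction w with
  | nil => exact SimpleGraph.Reachable.refl _
  | cons hadj _ ih => exact (h _ _ hadj).trans ih

/-- A connected graph on a finite vertex set has at least `card V - 1` edges. -/
theorem card_le_of_connected {V : Type*} [Fintype V] :
    ∀ (k : ℕ) (G : SimpleGraph V), G.edgeFinset.card = k → G.Connected →
      Fintype.card V ≤ k + 1 := by
  intro k
  induction k using Nat.strong_induction_on with
  | _ k ih =>
    intro G hk hconn
    by_cases hac : G.IsAcyclic
    · have ht : G.IsTree := ⟨hconn, hac⟩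
      have := ht.card_edgeFinset
      omega
    · simp only [SimpleGraph.IsAcyclic, not_forall, not_not] at hac
      obtain ⟨u, c, hc⟩ := hac
      have hne : c.edges ≠ [] := by
        intro h0
        have h3 := hc.three_le_length
        have := c.length_edges
        rw [h0] at this
        simp at this
        omega
      obtain ⟨e, he⟩ := List.exists_mem_of_ne_nil _ hne
      have heG : e ∈ G.edgeSet := c.edges_subset_edgeSet he
      have hnb : ¬ G.IsBridge e := by
        rw [SimpleGraph.isBridge_iff_mem_and_forall_cycle_notMem heG]
        push_neg
        exact ⟨u, c, hc, he⟩
      set G' := G.deleteEdges {e} with hG'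
      have hG'conn : G'.Connected := by
        rw [SimpleGraph.connected_iff] at hconn ⊢
        refine ⟨fun x y => ?_, hconn.2⟩
        refine reachable_map id (fun x y hadj => ?_) (hconn.1 x y)
        by_cases hxy : s(x, y) = e
        · induction e using Sym2.ind with
          | _ p q =>
            have hpq : (G \ SimpleGraph.fromEdgeSet {s(p,q)}).Reachable p q := by
              by_contra hnr; exact hnb hnr
            have hpq' : G'.Reachable p q := hpq
            rcases Sym2.eq_iff.1 hxy with ⟨hx, hy⟩ | ⟨hx, hy⟩
            · subst hx; subst hy; exact hpq'
            · subst hx; subst hy; exact hpq'.symm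
        · exact SimpleGraph.Adj.reachable (by simp [hG', hadj, hxy])
      have hcard : G'.edgeFinset.card = k - 1 := by
        have : G'.edgeFinset = G.edgeFinset.erase e := by
          ext f
          simp [hG', SimpleGraph.edgeFinset, SimpleGraph.edgeSet_deleteEdges,
            and_comm, eq_comm (a := f)]
        rw [this, Finset.card_erase_of_mem (by simpa [SimpleGraph.mem_edgeFinset] using heG), hk]
      have hkpos : 0 < k := by
        have : e ∈ G.edgeFinset := by simpa [SimpleGraph.mem_edgeFinset] using heG
        have := Finset.card_pos.2 ⟨e, this⟩
        omega
      have := ih (k - 1) (by omega) G' (by convert hcard) hG'conn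
      omega

/-- Converse of `IsTree.card_edgeFinset`. -/
theorem isTree_of_connected_of_card {V : Type*} [Fintype V] {G : SimpleGraph V}
    (hconn : G.Connected) (hcard : G.edgeFinset.card + 1 = Fintype.card V) :
    G.IsTree := by
  refine ⟨hconn, ?_⟩
  by_contra hac
  simp only [SimpleGraph.IsAcyclic, not_forall, not_not] at hac
  obtain ⟨u, c, hc⟩ := hac
  have hne : c.edges ≠ [] := by
    intro h0
    have h3 := hc.three_le_length
    have := c.length_edges
    rw [h0] at this
    simp at this
    omega
  obtain ⟨e, he⟩ := List.exists_mem_of_ne_nil _ hne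
  have heG : e ∈ G.edgeSet := c.edges_subset_edgeSet he
  have hnb : ¬ G.IsBridge e := by
    rw [SimpleGraph.isBridge_iff_mem_and_forall_cycle_notMem heG]
    push_neg
    exact ⟨u, c, hc, he⟩
  set G' := G.deleteEdges {e} with hG'
  have hG'conn : G'.Connected := by
    rw [SimpleGraph.connected_iff] at hconn ⊢
    refine ⟨fun x y => ?_, hconn.2⟩
    refine reachable_map id (fun x y hadj => ?_) (hconn.1 x y)
    by_cases hxy : s(x, y) = e
    · induction e using Sym2.ind with
      | _ p q =>
        have hpq : (G \ SimpleGraph.fromEdgeSet {s(p,q)}).Reachable p q := by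
          by_contra hnr; exact hnb hnr
        have hpq' : G'.Reachable p q := hpq
        rcases Sym2.eq_iff.1 hxy with ⟨hx, hy⟩ | ⟨hx, hy⟩
        · subst hx; subst hy; exact hpq'
        · subst hx; subst hy; exact hpq'.symm
    · exact SimpleGraph.Adj.reachable (by simp [hG', hadj, hxy])
  have hcard' : G'.edgeFinset.card = G.edgeFinset.card - 1 := by
    have : G'.edgeFinset = G.edgeFinset.erase e := by
      ext f
      simp [hG', SimpleGraph.edgeFinset, SimpleGraph.edgeSet_deleteEdges,
        and_comm, eq_comm (a := f)]
    rw [this, Finset.card_erase_of_mem (by simpa [SimpleGraph.mem_edgeFinset] using heG)]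
  have hkpos : 0 < G.edgeFinset.card := by
    have : e ∈ G.edgeFinset := by simpa [SimpleGraph.mem_edgeFinset] using heG
    have := Finset.card_pos.2 ⟨e, this⟩
    omega
  have := card_le_of_connected (G'.edgeFinset.card) G' (by congr 1; ext; simp) hG'conn
  omega

/-- First-order estimate for perturbing the endpoint of a segment. -/
theorem key_est {z u : E2} (hu : ‖u‖ = 1) (hz : z ≠ 0) {t : ℝ}
    (ht0 : 0 ≤ t) (ht1 : t ≤ ‖z‖) :
    ‖z - t • u‖ ≤ ‖z‖ - t * ⟪u, ‖z‖⁻¹ • z⟫ + t ^ 2 / (2 * ‖z‖) := by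
  have hzn : 0 < ‖z‖ := norm_pos_iff.mpr hz
  have hinner : ⟪u, ‖z‖⁻¹ • z⟫ = ‖z‖⁻¹ * ⟪u, z⟫ := real_inner_smul_right _ _ _
  have hcs : |⟪u, z⟫| ≤ ‖z‖ := by
    calc |⟪u, z⟫| ≤ ‖u‖ * ‖z‖ := abs_real_inner_le_norm u z
    _ = ‖z‖ := by rw [hu, one_mul]
  have hcs1 : ⟪u, z⟫ ≤ ‖z‖ := le_trans (le_abs_self _) hcs
  have hc1 : ⟪u, ‖z‖⁻¹ • z⟫ ≤ 1 := by
    rw [hinner, inv_mul_le_iff₀ hzn, mul_one]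
    exact hcs1
  set c : ℝ := ⟪u, ‖z‖⁻¹ • z⟫ with hc
  have hsq : ‖z - t • u‖ ^ 2 = ‖z‖ ^ 2 - 2 * t * ⟪u, z⟫ + t ^ 2 := by
    rw [norm_sub_sq_real, norm_smul, real_inner_smul_right]
    simp [hu, real_inner_comm z u]
    ring
  set B : ℝ := ‖z‖ - t * c + t ^ 2 / (2 * ‖z‖) with hB
  have hB0 : 0 ≤ B := by
    have h1 : t * c ≤ t := by nlinarith
    have h2 : 0 ≤ t ^ 2 / (2 * ‖z‖) := by positivity
    rw [hB]
    linarith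
  have hle : ‖z - t • u‖ ^ 2 ≤ B ^ 2 := by
    rw [hsq, hB, hinner]
    have : (‖z‖ - t * (‖z‖⁻¹ * ⟪u, z⟫) + t ^ 2 / (2 * ‖z‖)) ^ 2
        - (‖z‖ ^ 2 - 2 * t * ⟪u, z⟫ + t ^ 2)
        = (t * (‖z‖⁻¹ * ⟪u, z⟫) - t ^ 2 / (2 * ‖z‖)) ^ 2 := by
      field_simp
      ring
    nlinarith [sq_nonneg (t * (‖z‖⁻¹ * ⟪u, z⟫) - t ^ 2 / (2 * ‖z‖))]
  nlinarith [norm_nonneg (z - t • u)]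

theorem edgeFinset_congr {V : Type*} {G : SimpleGraph V} (i1 i2 : Fintype G.edgeSet) :
    @SimpleGraph.edgeFinset _ G i1 = @SimpleGraph.edgeFinset _ G i2 := by
  rw [Subsingleton.elim i1 i2]

theorem edgeLen_mk {α : Type*} (pos : α → E2) (i j : α) :
    edgeLen pos s(i, j) = dist (pos i) (pos j) := rfl

end SteinerAux

set_option maxHeartbeats 2000000 in
/-- In a Steiner minimal tree in the Euclidean plane, any two edges meeting
at a common vertex form an angle of at least 120 degrees. -/
theorem smt_angles_ge_120 (M : Finset E2) {n : ℕ} (G : SimpleGraph (Fin n))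
    (pos : Fin n → E2) (h : IsSMT M G pos) (v a b : Fin n)
    (hva : G.Adj v a) (hvb : G.Adj v b) (hab : a ≠ b) :
    2 * Real.pi / 3 ≤ EuclideanGeometry.angle (pos a) (pos v) (pos b) := by
  classical
  open scoped RealInnerProductSpace in
  by_contra hlt
  push_neg at hlt
  obtain ⟨⟨htree, hinj, hM⟩, hmin⟩ := h
  have hvNa : v ≠ a := hva.ne
  have hvNb : v ≠ b := hvb.ne
  have hlt' : InnerProductGeometry.angle (pos a - pos v) (pos b - pos v) < 2 * Real.pi / 3 := by
    simpa [EuclideanGeometry.angle, vsub_eq_sub] using hlt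
  set x0 : E2 := pos a - pos v with hx0def
  set y0 : E2 := pos b - pos v with hy0def
  have hx0 : x0 ≠ 0 := sub_ne_zero.mpr fun he => hvNa (hinj he).symm
  have hy0 : y0 ≠ 0 := sub_ne_zero.mpr fun he => hvNb (hinj he).symm
  have hnx : (0:ℝ) < ‖x0‖ := norm_pos_iff.mpr hx0
  have hny : (0:ℝ) < ‖y0‖ := norm_pos_iff.mpr hy0
  set x : E2 := ‖x0‖⁻¹ • x0 with hxdef
  set y : E2 := ‖y0‖⁻¹ • y0 with hydef
  have hx1 : ‖x‖ = 1 := norm_smul_inv_norm hx0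
  have hy1 : ‖y‖ = 1 := norm_smul_inv_norm hy0
  have hcos23 : Real.cos (2 * Real.pi / 3) = -(1/2) := by
    have h23 : 2 * Real.pi / 3 = Real.pi - Real.pi / 3 := by ring
    rw [h23, Real.cos_pi_sub, Real.cos_pi_div_three]
  have hcoslt : -(1/2) < Real.cos (InnerProductGeometry.angle x0 y0) := by
    rw [← hcos23]
    exact Real.cos_lt_cos_of_nonneg_of_le_pi (InnerProductGeometry.angle_nonneg _ _)
      (by linarith [Real.pi_pos]) hlt'
  have hinner_xy : -(1/2) < ⟪x, y⟫ := by
    have hca := InnerProductGeometry.cos_angle x0 y0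
    have hxy : ⟪x, y⟫ = ⟪x0, y0⟫ / (‖x0‖ * ‖y0‖) := by
      rw [hxdef, hydef, real_inner_smul_left, real_inner_smul_right]
      field_simp
    rw [hxy, ← hca]
    exact hcoslt
  set c : ℝ := ‖x + y‖ with hcdef
  have hc2 : c ^ 2 = 2 + 2 * ⟪x, y⟫ := by
    rw [hcdef, norm_add_sq_real, hx1, hy1]
    ring
  have hc1 : 1 < c := by nlinarith [norm_nonneg (x + y)]
  have hcpos : (0:ℝ) < c := by linarith
  have hxy0 : x + y ≠ 0 := by
    intro h0
    rw [h0, norm_zero] at hcdef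
    rw [hcdef] at hc1
    norm_num at hc1
  set u : E2 := c⁻¹ • (x + y) with hudef
  have hu1 : ‖u‖ = 1 := norm_smul_inv_norm hxy0
  have hux : ⟪u, x⟫ + ⟪u, y⟫ = c := by
    have h1 : ⟪u, x⟫ + ⟪u, y⟫ = ⟪u, x + y⟫ := (inner_add_right u x y).symm
    have h2 : ⟪(x : E2) + y, x + y⟫ = c ^ 2 := by
      rw [hcdef, real_inner_self_eq_norm_sq]
    rw [h1, hudef, real_inner_smul_left, h2]
    field_simp
  set K : ℝ := 1 / (2 * ‖x0‖) + 1 / (2 * ‖y0‖) with hKdef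
  have hK : (0:ℝ) < K := by positivity
  set δ : ℝ := min (min ‖x0‖ ‖y0‖) ((c - 1) / K) with hδdef
  have hδ : (0:ℝ) < δ := lt_min (lt_min hnx hny) (div_pos (by linarith) hK)
  have hu0 : u ≠ 0 := by
    intro h0
    rw [h0, norm_zero] at hu1
    norm_num at hu1
  have hbad : {t : ℝ | pos v + t • u ∈ Set.range pos}.Finite := by
    have hinj2 : Function.Injective (fun t : ℝ => pos v + t • u) := by
      intro t1 t2 he
      simp only [add_right_inj] at he
      exact smul_left_injective ℝ hu0 he
    exact Set.Finite.preimage hinj2.injOn (Set.finite_range pos)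
  obtain ⟨t, ⟨⟨ht0, htδ⟩, htgood⟩⟩ :=
    ((Set.Ioo_infinite hδ).diff hbad).nonempty
  set s : E2 := pos v + t • u with hsdef
  have hs_range : s ∉ Set.range pos := htgood
  have htx : t ≤ ‖x0‖ := le_trans htδ.le (le_trans (min_le_left _ _) (min_le_left _ _))
  have hty : t ≤ ‖y0‖ := le_trans htδ.le (le_trans (min_le_left _ _) (min_le_right _ _))
  have htK : t * K < c - 1 := by
    have h1 : t < (c - 1) / K := lt_of_lt_of_le htδ (min_le_right _ _)
    exact (lt_div_iff₀ hK).mp h1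
  have estA : dist s (pos a) ≤ ‖x0‖ - t * ⟪u, x⟫ + t ^ 2 / (2 * ‖x0‖) := by
    have heq : s - pos a = -(x0 - t • u) := by rw [hsdef, hx0def]; abel
    rw [dist_eq_norm, heq, norm_neg]
    exact SteinerAux.key_est hu1 hx0 ht0.le htx
  have estB : dist s (pos b) ≤ ‖y0‖ - t * ⟪u, y⟫ + t ^ 2 / (2 * ‖y0‖) := by
    have heq : s - pos b = -(y0 - t • u) := by rw [hsdef, hy0def]; abel
    rw [dist_eq_norm, heq, norm_neg]
    exact SteinerAux.key_est hu1 hy0 ht0.le hty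
  have estV : dist s (pos v) = t := by
    have heq : s - pos v = t • u := by rw [hsdef]; abel
    rw [dist_eq_norm, heq, norm_smul, hu1, mul_one, Real.norm_eq_abs, abs_of_pos ht0]
  -- ### the modified graph
  set ι : Fin n → Fin (n + 1) := Fin.castSucc with hιdef
  set w : Fin (n + 1) := Fin.last n with hwdef
  have hιinj : Function.Injective ι := Fin.castSucc_injective n
  have hιw : ∀ i, ι i ≠ w := fun i => (Fin.castSucc_lt_last i).ne
  set Eold : Finset (Sym2 (Fin n)) := G.edgeFinset \ {s(v, a), s(v, b)} with hEold
  set T : Finset (Sym2 (Fin (n+1))) := {s(w, ι v), s(w, ι a), s(w, ι b)} with hT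
  set F : Finset (Sym2 (Fin (n + 1))) := Eold.image (Sym2.map ι) ∪ T with hF
  set G' : SimpleGraph (Fin (n + 1)) := SimpleGraph.fromEdgeSet ↑F with hG'
  set pos' : Fin (n + 1) → E2 := Fin.snoc pos s with hpos'
  have hnd : ∀ e ∈ F, ¬ e.IsDiag := by
    intro e he
    rw [hF, Finset.mem_union] at he
    rcases he with he | he
    · obtain ⟨e', he', rfl⟩ := Finset.mem_image.mp he
      induction e' using Sym2.ind with
      | _ i j =>
        rw [Sym2.map_pair_eq, Sym2.mk_isDiag_iff]
        rw [hEold, Finset.mem_sdiff, SimpleGraph.mem_edgeFinset, SimpleGraph.mem_edgeSet] at he'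
        exact fun hij => he'.1.ne (hιinj hij)
    · rw [hT] at he
      simp only [Finset.mem_insert, Finset.mem_singleton] at he
      rcases he with rfl | rfl | rfl <;>
        · rw [Sym2.mk_isDiag_iff]; exact fun hh => (hιw _) hh.symm
  have hG'edgeS : G'.edgeSet = ↑F := by
    rw [hG', SimpleGraph.edgeSet_fromEdgeSet]
    ext e
    simp only [Set.mem_diff, Set.mem_setOf_eq, Finset.mem_coe]
    exact ⟨fun hh => hh.1, fun hh => ⟨hh, hnd e hh⟩⟩
  have hG'edge : ∀ (inst : Fintype G'.edgeSet), @SimpleGraph.edgeFinset _ G' inst = F := by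
    intro inst
    apply Finset.coe_injective
    rw [SimpleGraph.coe_edgeFinset, hG'edgeS]
  have keyG : ∀ (inst : Fintype G.edgeSet), @SimpleGraph.edgeFinset _ G inst = G.edgeFinset :=
    fun inst => SteinerAux.edgeFinset_congr inst _
  have hAdj : ∀ p q : Fin (n+1), G'.Adj p q ↔ s(p, q) ∈ F ∧ p ≠ q := by
    intro p q
    rw [hG', SimpleGraph.fromEdgeSet_adj, Finset.mem_coe]
  have hwvAdj : G'.Adj w (ι v) :=
    (hAdj _ _).mpr ⟨by rw [hF, hT]; simp, Ne.symm (hιw v)⟩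
  have hwaAdj : G'.Adj w (ι a) :=
    (hAdj _ _).mpr ⟨by rw [hF, hT]; simp, Ne.symm (hιw a)⟩
  have hwbAdj : G'.Adj w (ι b) :=
    (hAdj _ _).mpr ⟨by rw [hF, hT]; simp, Ne.symm (hιw b)⟩
  have hold : ∀ p q : Fin n, G.Adj p q → s(p,q) ≠ s(v,a) → s(p,q) ≠ s(v,b) →
      G'.Adj (ι p) (ι q) := by
    intro p q hpq h1 h2
    refine (hAdj _ _).mpr ⟨?_, fun hh => hpq.ne (hιinj hh)⟩
    rw [hF, Finset.mem_union]
    left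
    refine Finset.mem_image.mpr ⟨s(p,q), ?_, Sym2.map_pair_eq ι p q⟩
    rw [hEold, Finset.mem_sdiff, SimpleGraph.mem_edgeFinset, SimpleGraph.mem_edgeSet]
    exact ⟨hpq, by simp [h1, h2]⟩
  have hreach : ∀ p q : Fin n, G.Adj p q → G'.Reachable (ι p) (ι q) := by
    intro p q hpq
    by_cases h1 : s(p, q) = s(v, a)
    · rcases Sym2.eq_iff.mp h1 with ⟨rfl, rfl⟩ | ⟨rfl, rfl⟩
      · exact (hwvAdj.symm.reachable).trans hwaAdj.reachable
      · exact (hwaAdj.symm.reachable).trans hwvAdj.reachable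
    · by_cases h2 : s(p, q) = s(v, b)
      · rcases Sym2.eq_iff.mp h2 with ⟨rfl, rfl⟩ | ⟨rfl, rfl⟩
        · exact (hwvAdj.symm.reachable).trans hwbAdj.reachable
        · exact (hwbAdj.symm.reachable).trans hwvAdj.reachable
      · exact (hold p q hpq h1 h2).reachable
  have hpre : G.Preconnected := htree.isConnected.preconnected
  have hconn' : G'.Connected := by
    rw [SimpleGraph.connected_iff]
    refine ⟨fun p q => ?_, ⟨w⟩⟩
    induction p using Fin.lastCases with
    | last =>
      induction q using Fin.lastCases with
      | last => exact SimpleGraph.Reachable.refl _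
      | cast q' =>
        exact hwvAdj.reachable.trans (SteinerAux.reachable_map ι hreach (hpre v q'))
    | cast p' =>
      induction q using Fin.lastCases with
      | last =>
        exact (SteinerAux.reachable_map ι hreach (hpre p' v)).trans hwvAdj.symm.reachable
      | cast q' => exact SteinerAux.reachable_map ι hreach (hpre p' q')
  have hpairne : s(v, a) ≠ s(v, b) := by
    intro hh
    rcases Sym2.eq_iff.mp hh with ⟨-, h2⟩ | ⟨h2, -⟩
    · exact hab h2
    · exact hvNb h2
  have hpairsub : ({s(v, a), s(v, b)} : Finset (Sym2 (Fin n))) ⊆ G.edgeFinset := by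
    intro e he
    simp only [Finset.mem_insert, Finset.mem_singleton] at he
    rcases he with rfl | rfl
    · rw [SimpleGraph.mem_edgeFinset, SimpleGraph.mem_edgeSet]; exact hva
    · rw [SimpleGraph.mem_edgeFinset, SimpleGraph.mem_edgeSet]; exact hvb
  have hpaircard : ({s(v, a), s(v, b)} : Finset (Sym2 (Fin n))).card = 2 := by
    rw [Finset.card_insert_of_notMem (by simp [hpairne]), Finset.card_singleton]
  have hGEcard : G.edgeFinset.card + 1 = n := by
    have hh := htree.card_edgeFinset
    simpa using hh
  have h2le : 2 ≤ G.edgeFinset.card := by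
    have hh := Finset.card_le_card hpairsub
    rw [hpaircard] at hh
    exact hh
  have hEoldcard : Eold.card = G.edgeFinset.card - 2 := by
    rw [hEold, Finset.card_sdiff_of_subset hpairsub, hpaircard]
  have hTne12 : s(w, ι v) ≠ s(w, ι a) := by
    simp [Sym2.eq_iff, hιinj.ne hvNa, Ne.symm (hιw a)]
  have hTne13 : s(w, ι v) ≠ s(w, ι b) := by
    simp [Sym2.eq_iff, hιinj.ne hvNb, Ne.symm (hιw b)]
  have hTne23 : s(w, ι a) ≠ s(w, ι b) := by
    simp [Sym2.eq_iff, hιinj.ne hab, Ne.symm (hιw b)]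
  have hTcard : T.card = 3 := by
    rw [hT, Finset.card_insert_of_notMem (by simp [hTne12, hTne13]),
      Finset.card_insert_of_notMem (by simp [hTne23]), Finset.card_singleton]
  have hdisjF : Disjoint (Eold.image (Sym2.map ι)) T := by
    rw [Finset.disjoint_left]
    intro e he heT
    obtain ⟨e', he', rfl⟩ := Finset.mem_image.mp he
    induction e' using Sym2.ind with
    | _ i j =>
      rw [Sym2.map_pair_eq, hT] at heT
      simp only [Finset.mem_insert, Finset.mem_singleton, Sym2.eq_iff] at heT
      rcases heT with (⟨h1, -⟩ | ⟨-, h1⟩) | (⟨h1, -⟩ | ⟨-, h1⟩) | (⟨h1, -⟩ | ⟨-, h1⟩) <;>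
        exact absurd h1 (hιw _)
  have hFcard : F.card = n := by
    rw [hF, Finset.card_union_of_disjoint hdisjF,
      Finset.card_image_of_injective _ (Sym2.map.injective hιinj), hEoldcard, hTcard]
    omega
  have hG'tree : G'.IsTree := by
    refine SteinerAux.isTree_of_connected_of_card hconn' ?_
    rw [hG'edge _, hFcard]
    simp
  have hpι : ∀ i : Fin n, pos' (ι i) = pos i := by
    intro i
    rw [hpos', hιdef]
    simp [Fin.snoc_castSucc]
  have hpw : pos' w = s := by
    rw [hpos', hwdef]
    simp [Fin.snoc_last]
  have hinj' : Function.Injective pos' := by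
    intro i j hij
    rcases Fin.eq_castSucc_or_eq_last i with ⟨i', rfl⟩ | rfl <;>
      rcases Fin.eq_castSucc_or_eq_last j with ⟨j', rfl⟩ | rfl
    · rw [← hιdef] at hij
      rw [hpι i', hpι j'] at hij
      rw [hinj hij]
    · exfalso
      apply hs_range
      rw [← hιdef, ← hwdef] at hij
      rw [hpι i', hpw] at hij
      exact ⟨i', hij⟩
    · exfalso
      apply hs_range
      rw [← hιdef, ← hwdef] at hij
      rw [hpι j', hpw] at hij
      exact ⟨j', hij.symm⟩
    · rfl
  have hM' : ↑M ⊆ Set.range pos' := by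
    intro p hp
    obtain ⟨i, hi⟩ := hM hp
    exact ⟨ι i, by rw [hpι i, hi]⟩
  -- ### length computation
  have hTL : treeLength G' pos'
      = (treeLength G pos - (edgeLen pos s(v,a) + edgeLen pos s(v,b)))
        + (dist s (pos v) + (dist s (pos a) + dist s (pos b))) := by
    rw [treeLength, hG'edge _, hF, Finset.sum_union hdisjF]
    congr 1
    · rw [Finset.sum_image (fun p _ q _ hh => (Sym2.map.injective hιinj) hh)]
      have hsum : ∀ e ∈ Eold, edgeLen pos' (Sym2.map ι e) = edgeLen pos e := by
        intro e _
        induction e using Sym2.ind with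
        | _ i j =>
          rw [Sym2.map_pair_eq, SteinerAux.edgeLen_mk, SteinerAux.edgeLen_mk, hpι, hpι]
      rw [Finset.sum_congr rfl hsum, treeLength, keyG _, hEold,
        Finset.sum_sdiff_eq_sub hpairsub, Finset.sum_pair hpairne]
    · rw [hT, Finset.sum_insert (by simp [hTne12, hTne13]),
        Finset.sum_insert (by simp [hTne23]), Finset.sum_singleton,
        SteinerAux.edgeLen_mk, SteinerAux.edgeLen_mk, SteinerAux.edgeLen_mk,
        hpw, hpι, hpι, hpι]
  have hdva : edgeLen pos s(v, a) = ‖x0‖ := by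
    rw [SteinerAux.edgeLen_mk, dist_eq_norm, hx0def, norm_sub_rev]
  have hdvb : edgeLen pos s(v, b) = ‖y0‖ := by
    rw [SteinerAux.edgeLen_mk, dist_eq_norm, hy0def, norm_sub_rev]
  have hmin' := hmin (n+1) G' pos' ⟨hG'tree, hinj', hM'⟩
  have hfinal : treeLength G' pos' < treeLength G pos := by
    rw [hTL, hdva, hdvb, estV]
    have hsplit : t ^ 2 / (2 * ‖x0‖) + t ^ 2 / (2 * ‖y0‖) = t ^ 2 * K := by
      rw [hKdef, mul_add, mul_one_div, mul_one_div]
    have h3 : t * ⟪u, x⟫ + t * ⟪u, y⟫ = t * c := by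
      rw [← hux, mul_add]
    have h2' : t ^ 2 * K < t * (c - 1) :=
      calc t ^ 2 * K = t * (t * K) := by ring
      _ < t * (c - 1) := mul_lt_mul_of_pos_left htK ht0
    have h2'' : t ^ 2 * K < t * c - t := by linarith [h2', mul_sub t c 1, mul_one t]
    have hA2 : dist s (pos a) ≤ ‖x0‖ - t * ⟪u, x⟫ + t ^ 2 / (2 * ‖x0‖) := by exact estA
    have hB2 : dist s (pos b) ≤ ‖y0‖ - t * ⟪u, y⟫ + t ^ 2 / (2 * ‖y0‖) := by exact estB
    have hsum2 := add_le_add hA2 hB2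
    have hd : dist s (pos a) + dist s (pos b) ≤ ‖x0‖ + ‖y0‖ - t * c + t ^ 2 * K := by
      rw [← h3, ← hsplit]
      linarith [hsum2]
    linarith [hd, h2'']
  linarith [hmin', hfinal]
end
end

section
/- For any three points A, B, C in the plane all of whose pairwise angles in triangle ABC are less than 120 degrees, the Fermat–Torricelli point T (the point minimizing the sum of distances to A, B, C) is the unique point at which the three segments TA, TB, TC pairwise form angles of exactly 120 degrees. -/
noncomputable section

open EuclideanGeometry
open scoped RealInnerProductSpace

namespace FermatAux

lemma step_bound (w v : E2) (t : ℝ) (hw : w ≠ 0) (ht : 0 ≤ t) (hts : t * ‖v‖ ≤ ‖w‖) :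
    ‖w - t • v‖ ≤ ‖w‖ - t * ⟪w, v⟫ / ‖w‖ + t ^ 2 * ‖v‖ ^ 2 / (2 * ‖w‖) := by
  have hd : (0:ℝ) < ‖w‖ := norm_pos_iff.mpr hw
  have hcs : ⟪w, v⟫ ≤ ‖w‖ * ‖v‖ := real_inner_le_norm w v
  have hcs' : -(‖w‖ * ‖v‖) ≤ ⟪w, v⟫ := neg_le_of_abs_le (abs_real_inner_le_norm w v)
  have hrhs : 0 ≤ ‖w‖ - t * ⟪w, v⟫ / ‖w‖ + t ^ 2 * ‖v‖ ^ 2 / (2 * ‖w‖) := by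
    have h1 : t * ⟪w, v⟫ / ‖w‖ ≤ ‖w‖ := by
      rw [div_le_iff₀ hd]
      nlinarith [norm_nonneg v]
    have h2 : 0 ≤ t ^ 2 * ‖v‖ ^ 2 / (2 * ‖w‖) := by positivity
    linarith
  have hsq : ‖w - t • v‖ ^ 2 ≤ (‖w‖ - t * ⟪w, v⟫ / ‖w‖ + t ^ 2 * ‖v‖ ^ 2 / (2 * ‖w‖)) ^ 2 := by
    have hexp : ‖w - t • v‖ ^ 2 = ‖w‖ ^ 2 - 2 * (t * ⟪w, v⟫) + t ^ 2 * ‖v‖ ^ 2 := by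
      rw [norm_sub_sq_real, real_inner_smul_right, norm_smul]
      rw [Real.norm_eq_abs, abs_of_nonneg ht]
      ring
    rw [hexp]
    have hne : ‖w‖ ≠ 0 := ne_of_gt hd
    have hrw : (‖w‖ - t * ⟪w, v⟫ / ‖w‖ + t ^ 2 * ‖v‖ ^ 2 / (2 * ‖w‖)) ^ 2
        = ‖w‖ ^ 2 - 2 * (t * ⟪w, v⟫) + t ^ 2 * ‖v‖ ^ 2
          + (t * ⟪w, v⟫ / ‖w‖ - t ^ 2 * ‖v‖ ^ 2 / (2 * ‖w‖)) ^ 2 := by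
      field_simp
      ring
    rw [hrw]
    nlinarith [sq_nonneg (t * ⟪w, v⟫ / ‖w‖ - t ^ 2 * ‖v‖ ^ 2 / (2 * ‖w‖))]
  nlinarith [norm_nonneg (w - t • v)]

lemma lower_bound (w u : E2) (hw : w ≠ 0) : ‖w‖ - ⟪w, u⟫ / ‖w‖ ≤ ‖w - u‖ := by
  have hd : (0:ℝ) < ‖w‖ := norm_pos_iff.mpr hw
  have key : ‖w‖ ^ 2 - ⟪w, u⟫ ≤ ‖w - u‖ * ‖w‖ := by
    have h := real_inner_le_norm (w - u) w
    rw [inner_sub_left, real_inner_self_eq_norm_sq] at h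
    have := real_inner_comm w u
    linarith
  have : ‖w‖ - ⟪w, u⟫ / ‖w‖ = (‖w‖ ^ 2 - ⟪w, u⟫) / ‖w‖ := by field_simp
  rw [this, div_le_iff₀ hd]
  exact key

lemma cos_angle_pts (X T Y : E2) :
    Real.cos (angle X T Y) = ⟪X - T, Y - T⟫ / (‖X - T‖ * ‖Y - T‖) := by
  rw [EuclideanGeometry.angle, InnerProductGeometry.cos_angle, vsub_eq_sub, vsub_eq_sub]

lemma cos_2pi3 : Real.cos (2 * Real.pi / 3) = -(1 / 2) := by
  have h : 2 * Real.pi / 3 = Real.pi - Real.pi / 3 := by ring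
  rw [h, Real.cos_pi_sub, Real.cos_pi_div_three]

lemma angle_eq_of_cos (X T Y : E2) (h : Real.cos (angle X T Y) = -(1 / 2)) :
    angle X T Y = 2 * Real.pi / 3 := by
  have h1 := EuclideanGeometry.angle_nonneg X T Y
  have h2 := EuclideanGeometry.angle_le_pi X T Y
  have hp := Real.pi_pos
  refine Real.injOn_cos ⟨h1, h2⟩ ⟨by positivity, by linarith⟩ ?_
  rw [h, cos_2pi3]

lemma ne_of_angle (X T Y : E2) (h : angle X T Y = 2 * Real.pi / 3) : X ≠ T ∧ Y ≠ T := by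
  have hp := Real.pi_pos
  constructor
  · rintro rfl
    rw [EuclideanGeometry.angle_self_left] at h
    linarith
  · rintro rfl
    rw [EuclideanGeometry.angle_self_right] at h
    linarith

lemma inner_of_angle (X T Y : E2) (h : angle X T Y = 2 * Real.pi / 3) :
    ⟪X - T, Y - T⟫ = -(1 / 2) * (‖X - T‖ * ‖Y - T‖) := by
  obtain ⟨hX, hY⟩ := ne_of_angle X T Y h
  have hXn : ‖X - T‖ ≠ 0 := by simpa [sub_eq_zero] using hX
  have hYn : ‖Y - T‖ ≠ 0 := by simpa [sub_eq_zero] using hY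
  have hc := cos_angle_pts X T Y
  rw [h, cos_2pi3] at hc
  rw [eq_div_iff (by exact mul_ne_zero hXn hYn)] at hc
  linarith


lemma unit_inner (P Q : E2) (h : Q ≠ P) :
    Q - P = ‖Q - P‖ • (‖Q - P‖⁻¹ • (Q - P)) := by
  rw [smul_smul, mul_inv_cancel₀ (by simpa [sub_eq_zero] using h), one_smul]

set_option maxHeartbeats 1000000 in
lemma vertex_lt (P Q R : E2) (hQ : Q ≠ P) (hR : R ≠ P)
    (hang : angle Q P R < 2 * Real.pi / 3) :
    ∃ x : E2, dist x P + dist x Q + dist x R < dist P Q + dist P R := by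
  have hQ0 : Q - P ≠ 0 := by simpa [sub_eq_zero] using hQ
  have hR0 : R - P ≠ 0 := by simpa [sub_eq_zero] using hR
  set dQ := ‖Q - P‖ with hdQ
  set dR := ‖R - P‖ with hdR
  have hdQ0 : (0:ℝ) < dQ := norm_pos_iff.mpr hQ0
  have hdR0 : (0:ℝ) < dR := norm_pos_iff.mpr hR0
  set uQ : E2 := dQ⁻¹ • (Q - P) with huQdef
  set uR : E2 := dR⁻¹ • (R - P) with huRdef
  have huQ : ‖uQ‖ = 1 := norm_smul_inv_norm hQ0
  have huR : ‖uR‖ = 1 := norm_smul_inv_norm hR0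
  set c : ℝ := ⟪uQ, uR⟫ with hcdef
  -- c > -1/2
  have hcos : Real.cos (angle Q P R) = c := by
    rw [cos_angle_pts, hcdef, huQdef, huRdef, real_inner_smul_left, real_inner_smul_right]
    field_simp
    rfl
  have hc : -(1/2) < c := by
    have h1 := EuclideanGeometry.angle_nonneg Q P R
    have hp := Real.pi_pos
    have := Real.cos_lt_cos_of_nonneg_of_le_pi h1 (by linarith) hang
    rw [cos_2pi3, hcos] at this
    linarith
  set v : E2 := uQ + uR with hvdef
  have hv2 : ‖v‖ ^ 2 = 2 + 2 * c := by
    rw [hvdef, norm_add_sq_real, huQ, huR, ← hcdef]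
    ring
  have hv1 : 1 < ‖v‖ := by nlinarith [norm_nonneg v]
  have hv0 : (0:ℝ) < ‖v‖ := by linarith
  set K : ℝ := ‖v‖ ^ 2 * (1 / (2 * dQ) + 1 / (2 * dR)) with hKdef
  have hK : 0 < K := by positivity
  set ε : ℝ := ‖v‖ ^ 2 - ‖v‖ with hεdef
  have hε : 0 < ε := by nlinarith
  set t : ℝ := min (min dQ dR / ‖v‖) (ε / (2 * K)) with htdef
  have ht : 0 < t := lt_min (by positivity) (by positivity)
  have htQ : t * ‖v‖ ≤ dQ := by
    have h1 : t ≤ min dQ dR / ‖v‖ := min_le_left _ _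
    rw [le_div_iff₀ hv0] at h1
    exact h1.trans (min_le_left _ _)
  have htR : t * ‖v‖ ≤ dR := by
    have h1 : t ≤ min dQ dR / ‖v‖ := min_le_left _ _
    rw [le_div_iff₀ hv0] at h1
    exact h1.trans (min_le_right _ _)
  have htK : t * K ≤ ε / 2 := by
    have h1 : t ≤ ε / (2 * K) := min_le_right _ _
    rw [le_div_iff₀ (by positivity)] at h1
    linarith
  refine ⟨P + t • v, ?_⟩
  have hxP : dist (P + t • v) P = t * ‖v‖ := by
    rw [dist_eq_norm]
    simp [norm_smul, abs_of_pos ht]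
  have hinQ : ⟪Q - P, v⟫ = dQ * (1 + c) := by
    rw [unit_inner P Q hQ, ← huQdef, ← hdQ, real_inner_smul_left, hvdef, inner_add_right,
      real_inner_self_eq_norm_sq, huQ, ← hcdef]
    ring
  have hinR : ⟪R - P, v⟫ = dR * (1 + c) := by
    rw [unit_inner P R hR, ← huRdef, ← hdR, real_inner_smul_left, hvdef, inner_add_right,
      real_inner_self_eq_norm_sq, huR]
    have hcomm : ⟪uR, uQ⟫ = c := by rw [hcdef]; exact (real_inner_comm uR uQ).symm
    rw [hcomm]
    ring
  have hxQ : dist (P + t • v) Q ≤ dQ - t * (1 + c) + t ^ 2 * ‖v‖ ^ 2 / (2 * dQ) := by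
    have heq : dist (P + t • v) Q = ‖(Q - P) - t • v‖ := by
      rw [dist_eq_norm, show P + t • v - Q = -((Q - P) - t • v) by abel, norm_neg]
    rw [heq]
    have := step_bound (Q - P) v t hQ0 ht.le htQ
    rw [hinQ] at this
    calc ‖(Q - P) - t • v‖ ≤ dQ - t * (dQ * (1 + c)) / dQ + t ^ 2 * ‖v‖ ^ 2 / (2 * dQ) := this
    _ = dQ - t * (1 + c) + t ^ 2 * ‖v‖ ^ 2 / (2 * dQ) := by field_simp
  have hxR : dist (P + t • v) R ≤ dR - t * (1 + c) + t ^ 2 * ‖v‖ ^ 2 / (2 * dR) := by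
    have heq : dist (P + t • v) R = ‖(R - P) - t • v‖ := by
      rw [dist_eq_norm, show P + t • v - R = -((R - P) - t • v) by abel, norm_neg]
    rw [heq]
    have := step_bound (R - P) v t hR0 ht.le htR
    rw [hinR] at this
    calc ‖(R - P) - t • v‖ ≤ dR - t * (dR * (1 + c)) / dR + t ^ 2 * ‖v‖ ^ 2 / (2 * dR) := this
    _ = dR - t * (1 + c) + t ^ 2 * ‖v‖ ^ 2 / (2 * dR) := by field_simp
  have hPQ : dist P Q = dQ := by rw [dist_eq_norm, ← norm_neg]; congr 1; abel
  have hPR : dist P R = dR := by rw [dist_eq_norm, ← norm_neg]; congr 1; abel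
  rw [hxP, hPQ, hPR]
  have hsum : t ^ 2 * ‖v‖ ^ 2 / (2 * dQ) + t ^ 2 * ‖v‖ ^ 2 / (2 * dR) = t * (t * K) := by
    rw [hKdef]
    field_simp
  clear_value dQ dR uQ uR c v K ε t
  have hfin : t * ‖v‖ - 2 * (t * (1 + c)) + t * (t * K) < 0 := by
    have h2 : t * ‖v‖ - 2 * (t * (1 + c)) = -(t * ε) := by rw [hεdef, hv2]; ring
    have hK2 : t * (t * K) ≤ t * (ε / 2) := mul_le_mul_of_nonneg_left htK ht.le
    have h3 : t * (ε / 2) = (t * ε) / 2 := by ring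
    have h4 : 0 < t * ε := mul_pos ht hε
    linarith
  linarith [hxQ, hxR, hsum, hfin]

lemma dist_step (X T v : E2) (t : ℝ) (hX : X ≠ T) (ht : 0 ≤ t) (hts : t * ‖v‖ ≤ ‖X - T‖) :
    dist (T + t • v) X
      ≤ dist T X - t * ⟪‖X - T‖⁻¹ • (X - T), v⟫ + t ^ 2 * ‖v‖ ^ 2 / (2 * ‖X - T‖) := by
  have hX0 : X - T ≠ 0 := by simpa [sub_eq_zero] using hX
  have hd : (0:ℝ) < ‖X - T‖ := norm_pos_iff.mpr hX0
  have heq : dist (T + t • v) X = ‖(X - T) - t • v‖ := by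
    rw [dist_eq_norm, show T + t • v - X = -((X - T) - t • v) by abel, norm_neg]
  have hTX : dist T X = ‖X - T‖ := by rw [dist_eq_norm, ← norm_neg]; congr 1; abel
  have hu : t * ⟪‖X - T‖⁻¹ • (X - T), v⟫ = t * ⟪X - T, v⟫ / ‖X - T‖ := by
    rw [real_inner_smul_left]; field_simp
  rw [heq, hTX, hu]
  exact step_bound (X - T) v t hX0 ht hts

lemma lower_pt (X T' x : E2) (hX : X ≠ T') :
    dist T' X - ⟪‖X - T'‖⁻¹ • (X - T'), x - T'⟫ ≤ dist x X := by
  have hX0 : X - T' ≠ 0 := by simpa [sub_eq_zero] using hX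
  have hd : (0:ℝ) < ‖X - T'‖ := norm_pos_iff.mpr hX0
  have hTX : dist T' X = ‖X - T'‖ := by rw [dist_eq_norm, ← norm_neg]; congr 1; abel
  have hxX : dist x X = ‖(X - T') - (x - T')‖ := by
    rw [dist_eq_norm, ← norm_neg]; congr 1; abel
  have hu : ⟪‖X - T'‖⁻¹ • (X - T'), x - T'⟫ = ⟪X - T', x - T'⟫ / ‖X - T'‖ := by
    rw [real_inner_smul_left]; field_simp
  rw [hTX, hxX, hu]
  exact lower_bound (X - T') (x - T') hX0

set_option maxHeartbeats 1000000 in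
lemma balance (A B C T : E2) (hA : A ≠ T) (hB : B ≠ T) (hC : C ≠ T)
    (hmin : ∀ x : E2, dist T A + dist T B + dist T C ≤ dist x A + dist x B + dist x C) :
    ‖A - T‖⁻¹ • (A - T) + ‖B - T‖⁻¹ • (B - T) + ‖C - T‖⁻¹ • (C - T) = 0 := by
  by_contra hv
  have hA0 : A - T ≠ 0 := by simpa [sub_eq_zero] using hA
  have hB0 : B - T ≠ 0 := by simpa [sub_eq_zero] using hB
  have hC0 : C - T ≠ 0 := by simpa [sub_eq_zero] using hC
  set dA := ‖A - T‖ with hdA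
  set dB := ‖B - T‖ with hdB
  set dC := ‖C - T‖ with hdC
  have hdA0 : (0:ℝ) < dA := norm_pos_iff.mpr hA0
  have hdB0 : (0:ℝ) < dB := norm_pos_iff.mpr hB0
  have hdC0 : (0:ℝ) < dC := norm_pos_iff.mpr hC0
  set uA : E2 := dA⁻¹ • (A - T) with huAdef
  set uB : E2 := dB⁻¹ • (B - T) with huBdef
  set uC : E2 := dC⁻¹ • (C - T) with huCdef
  set v : E2 := uA + uB + uC with hvdef
  have hnv : (0:ℝ) < ‖v‖ := norm_pos_iff.mpr hv
  have hsumin : ⟪uA, v⟫ + ⟪uB, v⟫ + ⟪uC, v⟫ = ‖v‖ ^ 2 := by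
    rw [← inner_add_left, ← inner_add_left, ← hvdef, real_inner_self_eq_norm_sq]
  set K : ℝ := ‖v‖ ^ 2 * (1 / (2 * dA) + 1 / (2 * dB) + 1 / (2 * dC)) with hKdef
  have hK : 0 < K := by positivity
  set t : ℝ := min (min dA (min dB dC) / ‖v‖) (‖v‖ ^ 2 / (2 * K)) with htdef
  have ht : 0 < t := lt_min (by positivity) (by positivity)
  have htv : t * ‖v‖ ≤ min dA (min dB dC) := by
    have h1 : t ≤ min dA (min dB dC) / ‖v‖ := min_le_left _ _
    rwa [le_div_iff₀ hnv] at h1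
  have htA : t * ‖v‖ ≤ dA := htv.trans (min_le_left _ _)
  have htB : t * ‖v‖ ≤ dB := htv.trans ((min_le_right _ _).trans (min_le_left _ _))
  have htC : t * ‖v‖ ≤ dC := htv.trans ((min_le_right _ _).trans (min_le_right _ _))
  have hK2 : t * K ≤ ‖v‖ ^ 2 / 2 := by
    have h1 : t ≤ ‖v‖ ^ 2 / (2 * K) := min_le_right _ _
    rw [le_div_iff₀ (by positivity)] at h1
    linarith
  have h1 := dist_step A T v t hA ht.le htA
  have h2 := dist_step B T v t hB ht.le htB
  have h3 := dist_step C T v t hC ht.le htC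
  rw [← hdA, ← huAdef] at h1
  rw [← hdB, ← huBdef] at h2
  rw [← hdC, ← huCdef] at h3
  have hq : t ^ 2 * ‖v‖ ^ 2 / (2 * dA) + t ^ 2 * ‖v‖ ^ 2 / (2 * dB) + t ^ 2 * ‖v‖ ^ 2 / (2 * dC)
      = t * (t * K) := by
    rw [hKdef]; field_simp
  have hmv := hmin (T + t • v)
  have hsum' : t * ⟪uA, v⟫ + t * ⟪uB, v⟫ + t * ⟪uC, v⟫ = t * ‖v‖ ^ 2 := by
    rw [show t * ⟪uA, v⟫ + t * ⟪uB, v⟫ + t * ⟪uC, v⟫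
      = t * (⟪uA, v⟫ + ⟪uB, v⟫ + ⟪uC, v⟫) by ring, hsumin]
  have htK : t * (t * K) ≤ t * (‖v‖ ^ 2 / 2) := mul_le_mul_of_nonneg_left hK2 ht.le
  have h4 : t * (‖v‖ ^ 2 / 2) = t * ‖v‖ ^ 2 / 2 := by ring
  have hpos : 0 < t * ‖v‖ ^ 2 := by positivity
  clear_value dA dB dC uA uB uC v K t
  linarith

lemma cos_units (X T Y : E2) (hX : X - T ≠ 0) (hY : Y - T ≠ 0) :
    Real.cos (angle X T Y) = ⟪‖X - T‖⁻¹ • (X - T), ‖Y - T‖⁻¹ • (Y - T)⟫ := by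
  have hx : ‖X - T‖ ≠ 0 := norm_ne_zero_iff.mpr hX
  have hy : ‖Y - T‖ ≠ 0 := norm_ne_zero_iff.mpr hY
  rw [cos_angle_pts, real_inner_smul_left, real_inner_smul_right]
  generalize ⟪X - T, Y - T⟫ = p
  field_simp

lemma angle_units (X T Y : E2) (hX : X - T ≠ 0) (hY : Y - T ≠ 0)
    (h : ⟪‖X - T‖⁻¹ • (X - T), ‖Y - T‖⁻¹ • (Y - T)⟫ = -(1 / 2)) :
    angle X T Y = 2 * Real.pi / 3 :=
  angle_eq_of_cos _ _ _ (by rw [cos_units X T Y hX hY, h])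

lemma unit_inner_of_angle (X T Y : E2) (hX : X - T ≠ 0) (hY : Y - T ≠ 0)
    (h : angle X T Y = 2 * Real.pi / 3) :
    ⟪‖X - T‖⁻¹ • (X - T), ‖Y - T‖⁻¹ • (Y - T)⟫ = -(1 / 2) := by
  have hc := cos_units X T Y hX hY
  rw [h, cos_2pi3] at hc
  exact hc.symm

lemma pair_inner (u w z : E2) (hu : ‖u‖ = 1) (hw : ‖w‖ = 1) (hz : ‖z‖ = 1)
    (h : u + w + z = 0) : ⟪u, w⟫ = -(1 / 2) := by
  have hzz : z = -(u + w) := eq_neg_of_add_eq_zero_right h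
  have hn : ‖z‖ ^ 2 = ‖u + w‖ ^ 2 := by rw [hzz, norm_neg]
  rw [norm_add_sq_real, hu, hw, hz] at hn
  linarith

lemma angles_of_balance (A B C T : E2) (hA : A ≠ T) (hB : B ≠ T) (hC : C ≠ T)
    (hbal : ‖A - T‖⁻¹ • (A - T) + ‖B - T‖⁻¹ • (B - T) + ‖C - T‖⁻¹ • (C - T) = 0) :
    angle A T B = 2 * Real.pi / 3 ∧ angle B T C = 2 * Real.pi / 3 ∧
      angle C T A = 2 * Real.pi / 3 := by
  have hA0 : A - T ≠ 0 := by simpa [sub_eq_zero] using hA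
  have hB0 : B - T ≠ 0 := by simpa [sub_eq_zero] using hB
  have hC0 : C - T ≠ 0 := by simpa [sub_eq_zero] using hC
  set uA : E2 := ‖A - T‖⁻¹ • (A - T) with huAdef
  set uB : E2 := ‖B - T‖⁻¹ • (B - T) with huBdef
  set uC : E2 := ‖C - T‖⁻¹ • (C - T) with huCdef
  have nA : ‖uA‖ = 1 := norm_smul_inv_norm hA0
  have nB : ‖uB‖ = 1 := norm_smul_inv_norm hB0
  have nC : ‖uC‖ = 1 := norm_smul_inv_norm hC0
  refine ⟨angle_units A T B hA0 hB0 (pair_inner uA uB uC nA nB nC hbal), ?_, ?_⟩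
  · refine angle_units B T C hB0 hC0 (pair_inner uB uC uA nB nC nA ?_)
    rw [show uB + uC + uA = uA + uB + uC by abel]
    exact hbal
  · refine angle_units C T A hC0 hA0 (pair_inner uC uA uB nC nA nB ?_)
    rw [show uC + uA + uB = uA + uB + uC by abel]
    exact hbal

lemma ray_of_eq (X T' T : E2) (hX : X ≠ T')
    (heq : dist T X = dist T' X - ⟪‖X - T'‖⁻¹ • (X - T'), T - T'⟫) :
    ∃ c : ℝ, T - T' = c • (X - T') := by
  have hX0 : X - T' ≠ 0 := by simpa [sub_eq_zero] using hX
  have hd : (0:ℝ) < ‖X - T'‖ := norm_pos_iff.mpr hX0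
  set w : E2 := X - T' with hwdef
  set u : E2 := T - T' with hudef
  set p : ℝ := ⟪w, u⟫ with hpdef
  have hd1 : dist T X = ‖w - u‖ := by
    rw [dist_eq_norm, ← norm_neg]; congr 1; rw [hwdef, hudef]; abel
  have hd2 : dist T' X = ‖w‖ := by
    rw [dist_eq_norm, ← norm_neg]; congr 1; rw [hwdef]; abel
  have hiu : ⟪‖w‖⁻¹ • w, u⟫ = p / ‖w‖ := by
    rw [real_inner_smul_left, ← hpdef]; field_simp
  rw [hd1, hd2, hiu] at heq
  clear_value w u p
  have hinner : ⟪w - u, w⟫ = ‖w - u‖ * ‖w‖ := by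
    have e1 : ⟪w - u, w⟫ = ‖w‖ ^ 2 - p := by
      rw [inner_sub_left, real_inner_self_eq_norm_sq, real_inner_comm w u, ← hpdef]
    have e2 : ‖w - u‖ * ‖w‖ = ‖w‖ ^ 2 - p := by
      rw [heq]; field_simp
    rw [e1, e2]
  have key : ‖w‖ • (w - u) = ‖w - u‖ • w := inner_eq_norm_mul_iff_real.mp hinner
  have hsm : ‖w‖ • u = (‖w‖ - ‖w - u‖) • w := by
    rw [sub_smul, ← key, smul_sub]; abel
  refine ⟨‖w‖⁻¹ * (‖w‖ - ‖w - u‖), ?_⟩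
  rw [mul_smul, ← hsm, inv_smul_smul₀ (ne_of_gt hd)]
end FermatAux

/-- For a nondegenerate triangle `A B C` in the plane all of whose angles
are less than 120°, the Fermat–Torricelli point `T` (the minimizer of the sum of
distances to `A`, `B`, `C`) is the unique point at which the segments `TA`, `TB`, `TC`
pairwise form angles of exactly 120°. -/
theorem fermat_point_characterization (A B C T : E2)
    (hind : AffineIndependent ℝ ![A, B, C])
    (hA : angle B A C < 2 * Real.pi / 3)
    (hB : angle A B C < 2 * Real.pi / 3)
    (hC : angle A C B < 2 * Real.pi / 3)
    (hmin : ∀ x : E2, dist T A + dist T B + dist T C ≤ dist x A + dist x B + dist x C) :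
    (angle A T B = 2 * Real.pi / 3 ∧ angle B T C = 2 * Real.pi / 3 ∧
        angle C T A = 2 * Real.pi / 3) ∧
      ∀ T' : E2,
        (angle A T' B = 2 * Real.pi / 3 ∧ angle B T' C = 2 * Real.pi / 3 ∧
          angle C T' A = 2 * Real.pi / 3) → T' = T := by
  have hAB : A ≠ B := by
    have := hind.injective.ne (show (0 : Fin 3) ≠ 1 by decide)
    simpa using this
  have hAC : A ≠ C := by
    have := hind.injective.ne (show (0 : Fin 3) ≠ 2 by decide)
    simpa using this
  have hBC : B ≠ C := by
    have := hind.injective.ne (show (1 : Fin 3) ≠ 2 by decide)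
    simpa using this
  -- T is not a vertex
  have hTA : T ≠ A := by
    intro h
    obtain ⟨x, hx⟩ := FermatAux.vertex_lt A B C hAB.symm hAC.symm hA
    have hm := hmin x
    rw [h] at hm
    have := dist_self A
    linarith
  have hTB : T ≠ B := by
    intro h
    obtain ⟨x, hx⟩ := FermatAux.vertex_lt B A C hAB hBC.symm hB
    have hm := hmin x
    rw [h] at hm
    have := dist_self B
    linarith
  have hTC : T ≠ C := by
    intro h
    obtain ⟨x, hx⟩ := FermatAux.vertex_lt C A B hAC hBC hC
    have hm := hmin x
    rw [h] at hm
    have := dist_self C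
    linarith
  have hbal := FermatAux.balance A B C T hTA.symm hTB.symm hTC.symm hmin
  refine ⟨FermatAux.angles_of_balance A B C T hTA.symm hTB.symm hTC.symm hbal, ?_⟩
  rintro T' ⟨a1, a2, a3⟩
  obtain ⟨hAT', hBT'⟩ := FermatAux.ne_of_angle A T' B a1
  obtain ⟨_, hCT'⟩ := FermatAux.ne_of_angle B T' C a2
  have hA0 : A - T' ≠ 0 := by simpa [sub_eq_zero] using hAT'
  have hB0 : B - T' ≠ 0 := by simpa [sub_eq_zero] using hBT'
  have hC0 : C - T' ≠ 0 := by simpa [sub_eq_zero] using hCT'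
  set uA : E2 := ‖A - T'‖⁻¹ • (A - T') with huAdef
  set uB : E2 := ‖B - T'‖⁻¹ • (B - T') with huBdef
  set uC : E2 := ‖C - T'‖⁻¹ • (C - T') with huCdef
  have nA : ‖uA‖ = 1 := norm_smul_inv_norm hA0
  have nB : ‖uB‖ = 1 := norm_smul_inv_norm hB0
  have nC : ‖uC‖ = 1 := norm_smul_inv_norm hC0
  have i1 : ⟪uA, uB⟫ = -(1 / 2) := FermatAux.unit_inner_of_angle A T' B hA0 hB0 a1
  have i2 : ⟪uB, uC⟫ = -(1 / 2) := FermatAux.unit_inner_of_angle B T' C hB0 hC0 a2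
  have i3 : ⟪uC, uA⟫ = -(1 / 2) := FermatAux.unit_inner_of_angle C T' A hC0 hA0 a3
  -- the three unit vectors sum to zero
  have hsum0 : uA + uB + uC = 0 := by
    have hsq : ‖uA + uB + uC‖ ^ 2 = 0 := by
      rw [norm_add_sq_real, norm_add_sq_real, inner_add_left, nA, nB, nC, i1, i2,
        real_inner_comm uC uA, i3]
      norm_num
    have := pow_eq_zero_iff (n := 2) (by norm_num) |>.mp hsq
    exact norm_eq_zero.mp this
  -- T' is also a global minimizer
  have hlow : ∀ x : E2, dist T' A + dist T' B + dist T' C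
      ≤ dist x A + dist x B + dist x C := by
    intro x
    have l1 := FermatAux.lower_pt A T' x hAT'
    have l2 := FermatAux.lower_pt B T' x hBT'
    have l3 := FermatAux.lower_pt C T' x hCT'
    rw [← huAdef] at l1
    rw [← huBdef] at l2
    rw [← huCdef] at l3
    have hs : ⟪uA, x - T'⟫ + ⟪uB, x - T'⟫ + ⟪uC, x - T'⟫ = 0 := by
      rw [← inner_add_left, ← inner_add_left, hsum0, inner_zero_left]
    linarith
  -- equality in each lower bound at x = T
  have l1 := FermatAux.lower_pt A T' T hAT'
  have l2 := FermatAux.lower_pt B T' T hBT'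
  have l3 := FermatAux.lower_pt C T' T hCT'
  rw [← huAdef] at l1
  rw [← huBdef] at l2
  rw [← huCdef] at l3
  have hs : ⟪uA, T - T'⟫ + ⟪uB, T - T'⟫ + ⟪uC, T - T'⟫ = 0 := by
    rw [← inner_add_left, ← inner_add_left, hsum0, inner_zero_left]
  have hmT' := hmin T'
  have hlowT := hlow T
  have eqA : dist T A = dist T' A - ⟪uA, T - T'⟫ := by linarith
  have eqB : dist T B = dist T' B - ⟪uB, T - T'⟫ := by linarith
  have eqC : dist T C = dist T' C - ⟪uC, T - T'⟫ := by linarith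
  by_contra hne
  have hTT' : T - T' ≠ 0 := sub_ne_zero.mpr (fun h => hne h.symm)
  obtain ⟨ca, hca⟩ := FermatAux.ray_of_eq A T' T hAT' (by rw [← huAdef]; exact eqA)
  obtain ⟨cb, hcb⟩ := FermatAux.ray_of_eq B T' T hBT' (by rw [← huBdef]; exact eqB)
  obtain ⟨cc, hcc⟩ := FermatAux.ray_of_eq C T' T hCT' (by rw [← huCdef]; exact eqC)
  have hca0 : ca ≠ 0 := by rintro rfl; rw [zero_smul] at hca; exact hTT' hca
  have hcb0 : cb ≠ 0 := by rintro rfl; rw [zero_smul] at hcb; exact hTT' hcb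
  have hcc0 : cc ≠ 0 := by rintro rfl; rw [zero_smul] at hcc; exact hTT' hcc
  have hcol : Collinear ℝ ({A, B, C} : Set E2) := by
    rw [collinear_iff_exists_forall_eq_smul_vadd]
    refine ⟨T', T - T', ?_⟩
    intro p hp
    have hgen : ∀ (X : E2) (c : ℝ), c ≠ 0 → T - T' = c • (X - T') →
        ∃ r : ℝ, X = r • (T - T') +ᵥ T' := by
      intro X c hc0 hXc
      refine ⟨c⁻¹, ?_⟩
      have h1 : c⁻¹ • (T - T') = X - T' := by rw [hXc, inv_smul_smul₀ hc0]
      rw [vadd_eq_add, h1]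
      abel
    rcases hp with rfl | rfl | rfl
    · exact hgen p ca hca0 hca
    · exact hgen p cb hcb0 hcb
    · exact hgen p cc hcc0 hcc
  exact (affineIndependent_iff_not_collinear_set.mp hind) hcol
end
end
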